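/- Let A be a Banach algebra over ℂ and let A# = A ⊕ ℂ be its unitization, with multiplication (a,λ)(b,μ) = (ab + λb + μa, λμ) and norm ‖(a,λ)‖ = ‖a‖ + |λ|. Then A is a WAP-algebra if and only if A# is a WAP-algebra. -/

import Mathlib

noncomputable section
open Metric Set Function ContinuousLinearMap NormedSpace

section WAPDefs

variable (B : Type*) [NormedAddCommGroup B] [NormedSpace ℂ B]

/-- The set of weakly almost periodic functionals on a Banach space `B` equipped with a
continuous bilinear multiplication `m`: those `f` in the dual for which the orbit
`{f · a : ‖a‖ ≤ 1}` (where `(f · a)(b) = f (a * b)`) is relatively compact in the weak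
topology `σ(B*, B**)` of the dual `B*`. -/
def WAPset (m : B →L[ℂ] B →L[ℂ] B) : Set (StrongDual ℂ B) :=
  {f | IsCompact (closure
    ((fun a => toWeakSpace ℂ (StrongDual ℂ B) (f.comp (m a))) '' closedBall (0 : B) 1))}

/-- The WAP-seminorm `‖a‖_WAP = sup {|f a| : f ∈ WAP(B), ‖f‖ ≤ 1}`. -/
def wapNorm (m : B →L[ℂ] B →L[ℂ] B) (a : B) : ℝ :=
  sSup {r : ℝ | ∃ f ∈ WAPset B m, ‖f‖ ≤ 1 ∧ r = ‖f a‖}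

/-- `B` (with multiplication `m`) is a WAP-algebra when the canonical map into `WAP(B)*`
is bounded below, i.e. `sup {|f a| : f ∈ WAP(B), ‖f‖ ≤ 1} ≥ c ‖a‖` for some `c > 0`. -/
def IsWAPAlgebra (m : B →L[ℂ] B →L[ℂ] B) : Prop :=
  ∃ c > 0, ∀ a : B, c * ‖a‖ ≤ wapNorm B m a

/-- The canonical evaluation map from `B` into the dual of a subspace `X ⊆ B*`. -/
def dualEval (X : Submodule ℂ (StrongDual ℂ B)) (a : B) : StrongDual ℂ X :=
  (inclusionInDoubleDual ℂ B a).comp X.subtypeL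

/-- `B` (with multiplication `m`) is a dual Banach algebra with predual `X`: `X` is a
norm-closed subspace of `B*` which is a sub-bimodule for the actions `(f·b)(c) = f (b * c)`
and `(b·f)(c) = f (c * b)`, and the canonical evaluation map `B → X*` is an isometric
isomorphism. -/
structure IsDualBanachAlgebra (m : B →L[ℂ] B →L[ℂ] B)
    (X : Submodule ℂ (StrongDual ℂ B)) : Prop where
  closed : IsClosed (X : Set (StrongDual ℂ B))
  rmod : ∀ f ∈ X, ∀ b : B, f.comp (m b) ∈ X
  lmod : ∀ f ∈ X, ∀ b : B, f.comp (m.flip b) ∈ X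
  isometric : ∀ b : B, @norm (StrongDual ℂ X) (@ContinuousLinearMap.hasOpNorm ℂ ℂ X ℂ _ _ _ _ _ _ _) (dualEval B X b) = ‖b‖
  surjective : Function.Surjective (dualEval B X)

end WAPDefs

section Unitization

variable (A : Type*) [NonUnitalNormedRing A] [NormedSpace ℂ A]
  [IsScalarTower ℂ A A] [SMulCommClass ℂ A A]

set_option linter.unusedSectionVars false

/-- The unitization multiplication `(λ, a)(μ, b) = (λμ, λ•b + μ•a + a*b)` as a bilinear
map on `A♯ = ℂ ⊕ A`, where `A♯` carries the ℓ¹-norm `‖(λ, a)‖ = |λ| + ‖a‖`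
(realized as `WithLp 1 (ℂ × A)`). -/
def unitizationMulBil : WithLp 1 (ℂ × A) →ₗ[ℂ] WithLp 1 (ℂ × A) →ₗ[ℂ] WithLp 1 (ℂ × A) :=
  LinearMap.mk₂ ℂ
    (fun x y => (WithLp.equiv 1 (ℂ × A)).symm
      (x.fst * y.fst, x.fst • y.snd + y.fst • x.snd + x.snd * y.snd))
    (by
      intro x x' y
      apply (WithLp.equiv 1 (ℂ × A)).injective
      apply Prod.ext
      · simp [add_mul]
      · simp [add_smul, smul_add, add_mul]
        abel)
    (by
      intro c x y
      apply (WithLp.equiv 1 (ℂ × A)).injective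
      apply Prod.ext
      · simp [mul_assoc]
      · simp [mul_smul, smul_add, smul_comm c, smul_mul_assoc])
    (by
      intro x y y'
      apply (WithLp.equiv 1 (ℂ × A)).injective
      apply Prod.ext
      · simp [mul_add]
      · simp [smul_add, add_smul, mul_add]
        abel)
    (by
      intro c x y
      apply (WithLp.equiv 1 (ℂ × A)).injective
      apply Prod.ext
      · simp [mul_comm, mul_assoc, mul_left_comm]
      · simp [mul_smul, smul_comm c, smul_add, mul_smul_comm])

theorem unitizationMul_norm (x y : WithLp 1 (ℂ × A)) :
    ‖unitizationMulBil A x y‖ ≤ 1 * ‖x‖ * ‖y‖ := by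
  have hx : ‖x‖ = ‖x.fst‖ + ‖x.snd‖ := by
    rw [WithLp.prod_norm_eq_add (by norm_num)]; norm_num
  have hy : ‖y‖ = ‖y.fst‖ + ‖y.snd‖ := by
    rw [WithLp.prod_norm_eq_add (by norm_num)]; norm_num
  have hxy : ‖unitizationMulBil A x y‖
      = ‖x.fst * y.fst‖ + ‖x.fst • y.snd + y.fst • x.snd + x.snd * y.snd‖ := by
    rw [WithLp.prod_norm_eq_add (by norm_num)]; norm_num [unitizationMulBil]
  rw [hx, hy, hxy, one_mul]
  have h1 : ‖x.fst • y.snd + y.fst • x.snd + x.snd * y.snd‖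
      ≤ ‖x.fst‖ * ‖y.snd‖ + ‖y.fst‖ * ‖x.snd‖ + ‖x.snd‖ * ‖y.snd‖ := by
    refine le_trans (norm_add_le _ _) ?_
    gcongr
    · refine le_trans (norm_add_le _ _) ?_
      gcongr <;> simp [norm_smul]
    · exact norm_mul_le _ _
  have h0 : ‖x.fst * y.fst‖ ≤ ‖x.fst‖ * ‖y.fst‖ := norm_mul_le _ _
  nlinarith [norm_nonneg x.fst, norm_nonneg x.snd, norm_nonneg y.fst, norm_nonneg y.snd]

set_option linter.unusedSectionVars true

/-- The multiplication of the unitization `A♯` (with the ℓ¹-norm) as a continuous bilinear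
map. -/
def unitizationMul : WithLp 1 (ℂ × A) →L[ℂ] WithLp 1 (ℂ × A) →L[ℂ] WithLp 1 (ℂ × A) :=
  LinearMap.mkContinuous₂ (unitizationMulBil A) 1 (unitizationMul_norm A)

end Unitization


section AuxWAP

variable (B : Type*) [NormedAddCommGroup B] [NormedSpace ℂ B]

instance : T2Space (WeakSpace ℂ B) := by
  have h : Function.Injective ((topDualPairing ℂ B).flip) := by
    intro x y hxy
    refine (NormedSpace.eq_iff_forall_dual_eq ℂ).2 fun g => ?_
    exact DFunLike.congr_fun hxy g
  exact (WeakBilin.isEmbedding h).t2Space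

instance : ContinuousSMul ℂ (WeakSpace ℂ B) :=
  WeakBilin.instContinuousSMul (topDualPairing ℂ B).flip

theorem wap_aux {X : Type*} [TopologicalSpace X] [T2Space X] {s K : Set X}
    (hK : IsCompact K) (h : s ⊆ K) : IsCompact (closure s) :=
  hK.of_isClosed_subset isClosed_closure (closure_minimal h hK.isClosed)

theorem zero_mem_WAPset (m : B →L[ℂ] B →L[ℂ] B) : (0 : StrongDual ℂ B) ∈ WAPset B m := by
  apply wap_aux (isCompact_singleton (x := (0 : WeakSpace ℂ (StrongDual ℂ B))))
  rintro _ ⟨a, _, rfl⟩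
  simp

theorem wapNorm_bddAbove (m : B →L[ℂ] B →L[ℂ] B) (a : B) :
    BddAbove {r : ℝ | ∃ f ∈ WAPset B m, ‖f‖ ≤ 1 ∧ r = ‖f a‖} := by
  refine ⟨‖a‖, ?_⟩
  rintro r ⟨f, _, hf1, rfl⟩
  calc ‖f a‖ ≤ ‖f‖ * ‖a‖ := f.le_opNorm a
  _ ≤ 1 * ‖a‖ := by gcongr
  _ = ‖a‖ := one_mul _

theorem wapNorm_nonempty (m : B →L[ℂ] B →L[ℂ] B) (a : B) :
    {r : ℝ | ∃ f ∈ WAPset B m, ‖f‖ ≤ 1 ∧ r = ‖f a‖}.Nonempty :=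
  ⟨0, 0, zero_mem_WAPset B m, by simp, by simp⟩

theorem le_wapNorm (m : B →L[ℂ] B →L[ℂ] B) {f : StrongDual ℂ B} (hf : f ∈ WAPset B m)
    (hf1 : ‖f‖ ≤ 1) (a : B) : ‖f a‖ ≤ wapNorm B m a :=
  le_csSup (wapNorm_bddAbove B m a) ⟨f, hf, hf1, rfl⟩

end AuxWAP

section AuxUnit
set_option linter.unusedSectionVars false

variable (A : Type*) [NonUnitalNormedRing A] [NormedSpace ℂ A]
  [IsScalarTower ℂ A A] [SMulCommClass ℂ A A]

/-- The embedding `A → A♯`. -/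
def jA : A →L[ℂ] WithLp 1 (ℂ × A) :=
  ((WithLp.prodContinuousLinearEquiv 1 ℂ ℂ A).symm : (ℂ × A) →L[ℂ] WithLp 1 (ℂ × A)).comp
    (ContinuousLinearMap.inr ℂ ℂ A)

/-- The projection `A♯ → A`. -/
def piA : WithLp 1 (ℂ × A) →L[ℂ] A :=
  (ContinuousLinearMap.snd ℂ ℂ A).comp
    ((WithLp.prodContinuousLinearEquiv 1 ℂ ℂ A : WithLp 1 (ℂ × A) →L[ℂ] ℂ × A))

/-- The augmentation character `A♯ → ℂ`. -/
def epsA : StrongDual ℂ (WithLp 1 (ℂ × A)) :=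
  (ContinuousLinearMap.fst ℂ ℂ A).comp
    ((WithLp.prodContinuousLinearEquiv 1 ℂ ℂ A : WithLp 1 (ℂ × A) →L[ℂ] ℂ × A))

@[simp] theorem jA_fst (a : A) : (jA A a).fst = 0 := rfl
@[simp] theorem jA_snd (a : A) : (jA A a).snd = a := rfl
@[simp] theorem piA_apply (x : WithLp 1 (ℂ × A)) : piA A x = x.snd := rfl
@[simp] theorem epsA_apply (x : WithLp 1 (ℂ × A)) : epsA A x = x.fst := rfl

theorem norm_eq (x : WithLp 1 (ℂ × A)) : ‖x‖ = ‖x.fst‖ + ‖x.snd‖ := by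
  rw [WithLp.prod_norm_eq_add (by norm_num)]; norm_num

@[simp] theorem norm_jA (a : A) : ‖jA A a‖ = ‖a‖ := by
  rw [norm_eq]; simp

theorem norm_jA_le : ‖jA A‖ ≤ 1 :=
  ContinuousLinearMap.opNorm_le_bound _ zero_le_one (fun a => by simp)

theorem norm_piA_le : ‖piA A‖ ≤ 1 :=
  ContinuousLinearMap.opNorm_le_bound _ zero_le_one
    (fun x => by rw [piA_apply, one_mul, norm_eq]; exact le_add_of_nonneg_left (norm_nonneg _))

theorem norm_epsA_le : ‖epsA A‖ ≤ 1 :=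
  ContinuousLinearMap.opNorm_le_bound _ zero_le_one
    (fun x => by rw [epsA_apply, one_mul, norm_eq]; exact le_add_of_nonneg_right (norm_nonneg _))

@[simp] theorem unitizationMul_fst (x y : WithLp 1 (ℂ × A)) :
    (unitizationMul A x y).fst = x.fst * y.fst := rfl

@[simp] theorem unitizationMul_snd (x y : WithLp 1 (ℂ × A)) :
    (unitizationMul A x y).snd = x.fst • y.snd + y.fst • x.snd + x.snd * y.snd := rfl

theorem restrict_identity (f : StrongDual ℂ (WithLp 1 (ℂ × A))) (a : A) :
    (f.comp (jA A)).comp (ContinuousLinearMap.mul ℂ A a)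
      = (f.comp (unitizationMul A (jA A a))).comp (jA A) := by
  ext b
  simp only [ContinuousLinearMap.comp_apply, ContinuousLinearMap.mul_apply']
  congr 1
  apply (WithLp.prodContinuousLinearEquiv 1 ℂ ℂ A).injective
  apply Prod.ext <;> simp

theorem eps_identity (x : WithLp 1 (ℂ × A)) :
    (epsA A).comp (unitizationMul A x) = x.fst • epsA A := by
  ext y; simp

theorem lift_identity (g : StrongDual ℂ A) (x : WithLp 1 (ℂ × A)) :
    (g.comp (piA A)).comp (unitizationMul A x)
      = x.fst • (g.comp (piA A)) + (g x.snd) • epsA A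
        + ((g.comp (ContinuousLinearMap.mul ℂ A x.snd)).comp (piA A)) := by
  ext y
  simp [mul_comm]


theorem restrict_mem_WAPset {f : StrongDual ℂ (WithLp 1 (ℂ × A))}
    (hf : f ∈ WAPset (WithLp 1 (ℂ × A)) (unitizationMul A)) :
    f.comp (jA A) ∈ WAPset A (ContinuousLinearMap.mul ℂ A) := by
  set T : StrongDual ℂ (WithLp 1 (ℂ × A)) →L[ℂ] StrongDual ℂ A :=
    (ContinuousLinearMap.compL ℂ A (WithLp 1 (ℂ × A)) ℂ).flip (jA A) with hT
  apply wap_aux (hf.image (WeakSpace.map T).continuous)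
  rintro _ ⟨a, ha, rfl⟩
  rw [mem_closedBall_zero_iff] at ha
  refine ⟨toWeakSpace ℂ _ (f.comp (unitizationMul A (jA A a))),
    subset_closure ⟨jA A a, ?_, rfl⟩, ?_⟩
  · rw [mem_closedBall_zero_iff, norm_jA]; exact ha
  · show T (f.comp (unitizationMul A (jA A a)))
      = toWeakSpace ℂ _ ((f.comp (jA A)).comp (ContinuousLinearMap.mul ℂ A a))
    exact congrArg (toWeakSpace ℂ _) (restrict_identity A f a).symm

theorem eps_mem_WAPset : epsA A ∈ WAPset (WithLp 1 (ℂ × A)) (unitizationMul A) := by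
  have hc : Continuous fun t : ℂ =>
      t • (toWeakSpace ℂ (StrongDual ℂ (WithLp 1 (ℂ × A))) (epsA A)) :=
    continuous_id.smul continuous_const
  apply wap_aux ((isCompact_closedBall (0:ℂ) 1).image hc)
  rintro _ ⟨x, hx, rfl⟩
  rw [mem_closedBall_zero_iff, norm_eq] at hx
  refine ⟨x.fst, ?_, ?_⟩
  · rw [mem_closedBall_zero_iff]
    have := norm_nonneg x.snd; linarith
  · show toWeakSpace ℂ _ ((epsA A).comp (unitizationMul A x))
      = x.fst • toWeakSpace ℂ _ (epsA A)
    rw [eps_identity]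
    exact map_smul (toWeakSpace ℂ _) _ _

theorem lift_mem_WAPset {g : StrongDual ℂ A} (hg : g ∈ WAPset A (ContinuousLinearMap.mul ℂ A))
    (hg1 : ‖g‖ ≤ 1) : g.comp (piA A) ∈ WAPset (WithLp 1 (ℂ × A)) (unitizationMul A) := by
  set T : StrongDual ℂ A →L[ℂ] StrongDual ℂ (WithLp 1 (ℂ × A)) :=
    (ContinuousLinearMap.compL ℂ (WithLp 1 (ℂ × A)) A ℂ).flip (piA A) with hT
  set Wf := toWeakSpace ℂ (StrongDual ℂ (WithLp 1 (ℂ × A))) (g.comp (piA A)) with hWf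
  set We := toWeakSpace ℂ (StrongDual ℂ (WithLp 1 (ℂ × A))) (epsA A) with hWe
  have hΨ : Continuous fun p : ℂ × ℂ × WeakSpace ℂ (StrongDual ℂ A) =>
      p.1 • Wf + p.2.1 • We + WeakSpace.map T p.2.2 :=
    ((continuous_fst.smul continuous_const).add
      ((continuous_fst.comp continuous_snd).smul continuous_const)).add
      ((WeakSpace.map T).continuous.comp (continuous_snd.comp continuous_snd))
  apply wap_aux
    (((isCompact_closedBall (0:ℂ) 1).prod ((isCompact_closedBall (0:ℂ) 1).prod hg)).image hΨ)
  rintro _ ⟨x, hx, rfl⟩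
  rw [mem_closedBall_zero_iff, norm_eq] at hx
  have hx1 : ‖x.fst‖ ≤ 1 := by have := norm_nonneg x.snd; linarith
  have hx2 : ‖x.snd‖ ≤ 1 := by have := norm_nonneg x.fst; linarith
  refine ⟨(x.fst, g x.snd,
      toWeakSpace ℂ (StrongDual ℂ A) (g.comp (ContinuousLinearMap.mul ℂ A x.snd))),
    ⟨?_, ?_, subset_closure ⟨x.snd, by rwa [mem_closedBall_zero_iff], rfl⟩⟩, ?_⟩
  · rwa [mem_closedBall_zero_iff]
  · rw [mem_closedBall_zero_iff]
    calc ‖g x.snd‖ ≤ ‖g‖ * ‖x.snd‖ := g.le_opNorm _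
    _ ≤ 1 * 1 := by gcongr
    _ = 1 := one_mul 1
  · refine Eq.symm ?_
    show toWeakSpace ℂ _ ((g.comp (piA A)).comp (unitizationMul A x))
      = x.fst • Wf + (g x.snd) • We + WeakSpace.map T
          (toWeakSpace ℂ (StrongDual ℂ A) (g.comp (ContinuousLinearMap.mul ℂ A x.snd)))
    rw [lift_identity]
    rfl

end AuxUnit

/-- A Banach algebra `A` is a WAP-algebra iff its unitization `A♯ = A ⊕ ℂ` (with the ℓ¹
norm `‖(a, λ)‖ = ‖a‖ + |λ|` and multiplication `(a,λ)(b,μ) = (ab + λb + μa, λμ)`) is a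
WAP-algebra. -/
theorem isWAPAlgebra_unitization_iff (A : Type*) [NonUnitalNormedRing A] [NormedSpace ℂ A] [IsScalarTower ℂ A A] [SMulCommClass ℂ A A] [CompleteSpace A] :
    IsWAPAlgebra A (ContinuousLinearMap.mul ℂ A) ↔
      IsWAPAlgebra (WithLp 1 (ℂ × A)) (unitizationMul A) := by
  
  constructor
  · rintro ⟨c, hc, h⟩
    refine ⟨min c 1 / 2, by positivity, fun x => ?_⟩
    have e1 : ‖x.fst‖ ≤ wapNorm (WithLp 1 (ℂ × A)) (unitizationMul A) x := by
      have := le_wapNorm (WithLp 1 (ℂ × A)) (unitizationMul A)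
        (eps_mem_WAPset A) (norm_epsA_le A) x
      simpa using this
    have e2 : c * ‖x.snd‖ ≤ wapNorm (WithLp 1 (ℂ × A)) (unitizationMul A) x := by
      refine le_trans (h x.snd) (csSup_le_csSup
        (wapNorm_bddAbove (WithLp 1 (ℂ × A)) (unitizationMul A) x)
        (wapNorm_nonempty A (ContinuousLinearMap.mul ℂ A) x.snd) ?_)
      rintro r ⟨g, hg, hg1, rfl⟩
      refine ⟨g.comp (piA A), lift_mem_WAPset A hg hg1, ?_, rfl⟩
      calc ‖g.comp (piA A)‖ ≤ ‖g‖ * ‖piA A‖ := ContinuousLinearMap.opNorm_comp_le _ _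
      _ ≤ 1 * 1 := by gcongr; exact norm_piA_le A
      _ = 1 := one_mul 1
    rw [norm_eq]
    have h1 : min c 1 ≤ c := min_le_left _ _
    have h2 : min c 1 ≤ 1 := min_le_right _ _
    have h3 : (0:ℝ) ≤ ‖x.fst‖ := norm_nonneg _
    have h4 : (0:ℝ) ≤ ‖x.snd‖ := norm_nonneg _
    nlinarith
  · rintro ⟨c, hc, h⟩
    refine ⟨c, hc, fun a => ?_⟩
    have e1 : c * ‖a‖ ≤ wapNorm (WithLp 1 (ℂ × A)) (unitizationMul A) (jA A a) := by
      have := h (jA A a)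
      rwa [norm_jA] at this
    refine le_trans e1 (csSup_le_csSup
      (wapNorm_bddAbove A (ContinuousLinearMap.mul ℂ A) a)
      (wapNorm_nonempty (WithLp 1 (ℂ × A)) (unitizationMul A) (jA A a)) ?_)
    rintro r ⟨f, hf, hf1, rfl⟩
    refine ⟨f.comp (jA A), restrict_mem_WAPset A hf, ?_, rfl⟩
    calc ‖f.comp (jA A)‖ ≤ ‖f‖ * ‖jA A‖ := ContinuousLinearMap.opNorm_comp_le _ _
    _ ≤ 1 * 1 := by gcongr; exact norm_jA_le A
    _ = 1 := one_mul 1
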